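/- arXiv:1204.0758 — 4 statements merged into one kernel-verified Lean document; each statement's English description precedes it below -/
import Mathlib

section
/- Let a < b be real numbers and let f : ℝ → ℝ be continuous on [a,b]. Assume that the upper right Dini derivative f'_+(y) := limsup_{h→0+} (f(y+h) − f(y))/h is finite for every y ∈ [a,b] and that the function y ↦ f'_+(y) is Lebesgue integrable over [a,b]. Then f(b) − f(a) = ∫_{[a,b]} f'_+(y) dy, where the integral is the Lebesgue integral. -/
open MeasureTheory Filter Set

/-- Upper right Dini derivative, as a value in `EReal = [-∞,∞]`. -/
noncomputable def diniE (f : ℝ → ℝ) (x : ℝ) : EReal :=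
  Filter.limsup (fun h : ℝ => (((f (x + h) - f x) / h : ℝ) : EReal))
    (nhdsWithin 0 (Set.Ioi 0))

open scoped Topology

/-- Adaptation of `sub_le_integral_of_hasDeriv_right_of_le_Ico` where the derivative
hypothesis is weakened to a frequently-slope bound (suitable for Dini derivatives). -/
theorem mySub_le_integral {g g' φ : ℝ → ℝ} {a b : ℝ} (hab : a ≤ b)
    (hcont : ContinuousOn g (Icc a b))
    (hderiv : ∀ x ∈ Ico a b, ∀ y : ℝ, g' x < y → ∃ᶠ u in 𝓝[>] x, g u - g x ≤ (u - x) * y)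
    (φint : IntegrableOn φ (Icc a b)) (hφg : ∀ x ∈ Ico a b, g' x ≤ φ x) :
    g b - g a ≤ ∫ y in a..b, φ y := by
  refine le_of_forall_pos_le_add fun ε εpos => ?_
  rcases exists_lt_lowerSemicontinuous_integral_lt φ φint εpos with
    ⟨G', f_lt_G', G'cont, G'int, G'lt_top, hG'⟩
  set s := {t | g t - g a ≤ ∫ u in a..t, (G' u).toReal} ∩ Icc a b
  have s_closed : IsClosed s := by
    have : ContinuousOn (fun t => (g t - g a, ∫ u in a..t, (G' u).toReal)) (Icc a b) := by
      rw [← uIcc_of_le hab] at G'int hcont ⊢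
      exact (hcont.sub continuousOn_const).prodMk (intervalIntegral.continuousOn_primitive_interval G'int)
    simp only [s, inter_comm]
    exact this.preimage_isClosed_of_isClosed isClosed_Icc OrderClosedTopology.isClosed_le'
  have main : Icc a b ⊆ {t | g t - g a ≤ ∫ u in a..t, (G' u).toReal} := by
    refine s_closed.Icc_subset_of_forall_exists_gt
      (by simp only [intervalIntegral.integral_same, mem_setOf_eq, sub_self, le_rfl]) fun t ht v t_lt_v => ?_
    obtain ⟨y, g'_lt_y', y_lt_G'⟩ : ∃ y : ℝ, (g' t : EReal) < y ∧ (y : EReal) < G' t :=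
      EReal.lt_iff_exists_real_btwn.1 ((EReal.coe_le_coe_iff.2 (hφg t ht.2)).trans_lt (f_lt_G' t))
    have I1 : ∀ᶠ u in 𝓝[>] t, (u - t) * y ≤ ∫ w in t..u, (G' w).toReal := by
      have B : ∀ᶠ u in 𝓝 t, (y : EReal) < G' u := G'cont.lowerSemicontinuousAt _ _ y_lt_G'
      rcases mem_nhds_iff_exists_Ioo_subset.1 B with ⟨m, M, ⟨hm, hM⟩, H⟩
      have : Ioo t (min M b) ∈ 𝓝[>] t := Ioo_mem_nhdsGT (lt_min hM ht.right.right)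
      filter_upwards [this] with u hu
      have I : Icc t u ⊆ Icc a b := Icc_subset_Icc ht.2.1 (hu.2.le.trans (min_le_right _ _))
      calc
        (u - t) * y = ∫ _ in Icc t u, y := by
          simp only [hu.left.le, MeasureTheory.integral_const, smul_eq_mul, sub_nonneg,
            measureReal_restrict_apply_univ, Real.volume_real_Icc_of_le hu.left.le]
        _ ≤ ∫ w in t..u, (G' w).toReal := by
          rw [intervalIntegral.integral_of_le hu.1.le, ← integral_Icc_eq_integral_Ioc]
          apply setIntegral_mono_ae_restrict
          · exact integrableOn_const (by simp [Real.volume_Icc])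
          · exact IntegrableOn.mono_set G'int I
          · have C1 : ∀ᵐ x : ℝ ∂volume.restrict (Icc t u), G' x < ⊤ :=
              ae_mono (Measure.restrict_mono I le_rfl) G'lt_top
            have C2 : ∀ᵐ x : ℝ ∂volume.restrict (Icc t u), x ∈ Icc t u :=
              ae_restrict_mem measurableSet_Icc
            filter_upwards [C1, C2] with x G'x hx
            apply EReal.coe_le_coe_iff.1
            have : x ∈ Ioo m M := by
              simp only [hm.trans_le hx.left,
                (hx.right.trans_lt hu.right).trans_le (min_le_left M b), mem_Ioo, and_self_iff]
            refine (H this).out.le.trans_eq ?_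
            exact (EReal.coe_toReal G'x.ne (f_lt_G' x).ne_bot).symm
    have I2 : ∃ᶠ u in 𝓝[>] t, g u - g t ≤ (u - t) * y :=
      hderiv t ⟨ht.2.1, ht.2.2⟩ y (EReal.coe_lt_coe_iff.1 g'_lt_y')
    have I4 : ∀ᶠ u in 𝓝[>] t, u ∈ Ioc t (min v b) := by
      refine mem_nhdsGT_iff_exists_Ioc_subset.2 ⟨min v b, ?_, Subset.rfl⟩
      simp only [lt_min_iff, mem_Ioi]
      exact ⟨t_lt_v, ht.2.2⟩
    rcases (I2.and_eventually (I1.and I4)).exists with ⟨x, hx2, hx1, h'x⟩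
    refine ⟨x, ?_, Ioc_subset_Ioc le_rfl (min_le_left _ _) h'x⟩
    calc
      g x - g a = g t - g a + (g x - g t) := by abel
      _ ≤ (∫ w in a..t, (G' w).toReal) + ∫ w in t..x, (G' w).toReal :=
        add_le_add ht.1 (hx2.trans hx1)
      _ = ∫ w in a..x, (G' w).toReal := by
        apply intervalIntegral.integral_add_adjacent_intervals
        · rw [intervalIntegrable_iff_integrableOn_Ioc_of_le ht.2.1]
          exact IntegrableOn.mono_set G'int
            (Ioc_subset_Icc_self.trans (Icc_subset_Icc le_rfl ht.2.2.le))
        · rw [intervalIntegrable_iff_integrableOn_Ioc_of_le h'x.1.le]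
          apply IntegrableOn.mono_set G'int
          exact Ioc_subset_Icc_self.trans (Icc_subset_Icc ht.2.1 (h'x.2.trans (min_le_right _ _)))
  calc
    g b - g a ≤ ∫ y in a..b, (G' y).toReal := main (right_mem_Icc.2 hab)
    _ ≤ (∫ y in a..b, φ y) + ε := by
      convert (show (∫ x in Icc a b, (G' x).toReal) ≤ (∫ x in Icc a b, φ x) + ε from hG'.le) <;>
        · rw [intervalIntegral.integral_of_le hab]
          simp only [integral_Icc_eq_integral_Ioc', Real.volume_singleton]

lemma nhdsGT_map_add (x : ℝ) : Filter.map (fun h => x + h) (𝓝[>] (0:ℝ)) = 𝓝[>] x := by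
  have := (Homeomorph.addLeft x).isEmbedding.map_nhdsWithin_eq (Ioi (0:ℝ)) 0
  simpa [image_const_add_Ioi] using this

/-- `diniE` as a limsup of slopes over `𝓝[>] x`. -/
lemma diniE_eq (f : ℝ → ℝ) (x : ℝ) :
    diniE f x = Filter.limsup (fun u : ℝ => (((f u - f x) / (u - x) : ℝ) : EReal)) (𝓝[>] x) := by
  have hfun : (fun h : ℝ => (((f (x + h) - f x) / h : ℝ) : EReal))
      = (fun u : ℝ => (((f u - f x) / (u - x) : ℝ) : EReal)) ∘ (fun h => x + h) := by
    funext h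
    simp [Function.comp, add_sub_cancel_left]
  unfold diniE Filter.limsup
  rw [hfun, ← Filter.map_map, nhdsGT_map_add]


/-- Fundamental theorem of calculus for upper right Dini derivatives
(Theorem 11 in Hagood–Thomson). -/
theorem stmt_0 (a b : ℝ) (hab : a < b) (f : ℝ → ℝ)
    (hcont : ContinuousOn f (Set.Icc a b))
    (hfin : ∀ y ∈ Set.Icc a b, diniE f y ≠ ⊥ ∧ diniE f y ≠ ⊤)
    (hint : MeasureTheory.IntegrableOn (fun y => (diniE f y).toReal) (Set.Icc a b)) :
    f b - f a = ∫ y in Set.Icc a b, (diniE f y).toReal := by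
  set φ : ℝ → ℝ := fun y => (diniE f y).toReal with hφ
  have coe_dini : ∀ y ∈ Icc a b, (φ y : EReal) = diniE f y := fun y hy =>
    EReal.coe_toReal (hfin y hy).2 (hfin y hy).1
  have key : f b - f a = ∫ y in a..b, φ y := by
    have h1 : f b - f a ≤ ∫ y in a..b, φ y := by
      apply mySub_le_integral hab.le hcont _ hint (fun x _ => le_rfl)
      intro x hx y hy
      have hlt : diniE f x < (y : EReal) := by
        rw [← coe_dini x (Ico_subset_Icc_self hx)]
        exact_mod_cast hy
      rw [diniE_eq] at hlt
      have hev : ∀ᶠ u in 𝓝[>] x, (((f u - f x) / (u - x) : ℝ) : EReal) < (y : EReal) :=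
        Filter.eventually_lt_of_limsup_lt hlt
      refine ((hev.and self_mem_nhdsWithin).mono fun u hu => ?_).frequently
      have hux : (0:ℝ) < u - x := sub_pos.2 hu.2
      have := (div_lt_iff₀ hux).1 (by exact_mod_cast hu.1)
      linarith [this]
    have h2 : ∫ y in a..b, φ y ≤ f b - f a := by
      have := mySub_le_integral (g := fun y => -f y) (g' := fun y => -φ y) (φ := fun y => -φ y)
        hab.le hcont.neg ?_ hint.neg (fun x _ => le_rfl)
      · have heq : ∫ y in a..b, -φ y = -∫ y in a..b, φ y := intervalIntegral.integral_neg
        rw [heq] at this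
        linarith [this]
      · intro x hx y hy
        have hlt : ((-y : ℝ) : EReal) < diniE f x := by
          rw [← coe_dini x (Ico_subset_Icc_self hx)]
          exact_mod_cast (by linarith : -y < φ x)
        rw [diniE_eq] at hlt
        have hfr : ∃ᶠ u in 𝓝[>] x, ((-y : ℝ) : EReal) < (((f u - f x) / (u - x) : ℝ) : EReal) :=
          Filter.frequently_lt_of_lt_limsup (by isBoundedDefault) hlt
        refine (hfr.and_eventually self_mem_nhdsWithin).mono fun u hu => ?_
        have hux : (0:ℝ) < u - x := sub_pos.2 hu.2
        have h' : (-y : ℝ) < (f u - f x) / (u - x) := by exact_mod_cast hu.1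
        have h2 := (lt_div_iff₀ hux).1 h'
        show -f u - -f x ≤ (u - x) * y
        nlinarith [h2]
    linarith
  rw [key, intervalIntegral.integral_of_le hab.le, integral_Icc_eq_integral_Ioc]
end

section
/- Let ν be a measure on 𝒮 with ∫_𝒮 (1 − s_1) ν(ds) < ∞, let f ∈ 𝒯 and let 0 < a < b. Then ∫_𝒮 sup_{x∈[a,b]} |f(x + ln s_1) − f(x)| ν(ds) < ∞, where f(x + ln s_1) is interpreted as 1 when s_1 = 0. -/
open MeasureTheory Filter Set

/-- The class 𝒯: nonincreasing `f : ℝ → [0,1]`, equal to `1` on `(-∞,0)`,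
continuous on `(0,∞)`, tending to `0` at `+∞`, with upper right Dini derivative
finite and bounded on every compact subinterval of `(0,∞)`. -/
def MemT (f : ℝ → ℝ) : Prop :=
  Antitone f ∧ (∀ x, f x ∈ Set.Icc (0 : ℝ) 1) ∧ (∀ x < (0 : ℝ), f x = 1) ∧
    ContinuousOn f (Set.Ioi 0) ∧ Filter.Tendsto f Filter.atTop (nhds 0) ∧
    ∀ s t : ℝ, 0 < s → s < t →
      ∃ C : ℝ, ∀ x ∈ Set.Icc s t, -(C : EReal) ≤ diniE f x ∧ diniE f x ≤ (C : EReal)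
/-- The simplex 𝒮 of nonincreasing nonnegative sequences with total sum at most 1
(indexed from `0`, so `s 0` plays the role of `s₁`). -/
def fragSimplex : Set (ℕ → ℝ) :=
  {s | (∀ n, s (n + 1) ≤ s n) ∧ (∀ n, 0 ≤ s n) ∧ Summable s ∧ (∑' n, s n) ≤ 1}

open Topology in
/-- Lipschitz-from-below from a lower bound on the upper right Dini derivative. -/
lemma lip_of_dini (f : ℝ → ℝ) (s t C : ℝ)
    (hcont : ContinuousOn f (Icc s t))
    (hd : ∀ x ∈ Icc s t, -(C : EReal) ≤ diniE f x) :
    ∀ x ∈ Icc s t, ∀ y ∈ Icc s t, x ≤ y → f x - f y ≤ C * (y - x) := by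
  intro x hx y hy hxy
  have hsub : Icc x y ⊆ Icc s t := Icc_subset_Icc hx.1 hy.2
  have key : ∀ z ∈ Icc x y, -f z ≤ -f x + C * (z - x) := by
    refine image_le_of_liminf_slope_right_le_deriv_boundary
      (f := fun z => -f z) (B := fun z => -f x + C * (z - x)) (B' := fun _ => C)
      ((hcont.mono hsub).neg) (by simp) ?_ ?_ ?_
    · fun_prop
    · intro u hu
      exact (((hasDerivWithinAt_id u (Ici u)).sub_const x).const_mul C).const_add (-f x)
        |>.congr_deriv (by ring)
    · intro u hu r hr
      have hdu : -(C : EReal) ≤ diniE f u := hd u (hsub (Ico_subset_Icc_self hu))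
      have h1 : ((-r : ℝ) : EReal) < diniE f u := by
        refine lt_of_lt_of_le ?_ hdu
        rw [show -(C : EReal) = ((-C : ℝ) : EReal) by simp]
        exact_mod_cast neg_lt_neg hr
      have h2 : ∃ᶠ h in 𝓝[>] (0:ℝ),
          ((-r : ℝ) : EReal) < (((f (u + h) - f u) / h : ℝ) : EReal) :=
        frequently_lt_of_lt_limsup (by isBoundedDefault) h1
      have hmap : Tendsto (fun h : ℝ => u + h) (𝓝[>] (0:ℝ)) (𝓝[>] u) := by
        apply tendsto_nhdsWithin_of_tendsto_nhds_of_eventually_within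
        · simpa using (continuous_add_left u).tendsto (0:ℝ) |>.mono_left
            nhdsWithin_le_nhds
        · filter_upwards [self_mem_nhdsWithin] with h hh
          simpa using hh
      have h3 : ∃ᶠ h in 𝓝[>] (0:ℝ), slope (fun z => -f z) u (u + h) < r := by
        refine (h2.and_eventually (eventually_mem_nhdsWithin)).mono ?_
        rintro h ⟨hh, (hh0 : (0:ℝ) < h)⟩
        have : -r < (f (u + h) - f u) / h := by exact_mod_cast hh
        have : slope (fun z => -f z) u (u + h) = -((f (u + h) - f u) / h) := by
          rw [slope_def_field]; simp only [add_sub_cancel_left]; ring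
        rw [this]; linarith
      exact hmap.frequently h3
  have := key y (right_mem_Icc.2 hxy)
  linarith

/-- Finiteness of `∫_𝒮 sup_{x ∈ [a,b]} |f(x + ln s₁) - f(x)| ν(ds)` for `f ∈ 𝒯`,
with `f(x + ln s₁)` interpreted as `1` when `s₁ = 0`. -/
theorem stmt_6 (ν : MeasureTheory.Measure fragSimplex)
    (hν : ∫⁻ s, ENNReal.ofReal (1 - (s : ℕ → ℝ) 0) ∂ν < ⊤)
    (f : ℝ → ℝ) (hf : MemT f) (a b : ℝ) (ha : 0 < a) (hab : a < b) :
    ∫⁻ s, ENNReal.ofReal (sSup ((fun x =>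
        |(if (s : ℕ → ℝ) 0 = 0 then (1 : ℝ) else f (x + Real.log ((s : ℕ → ℝ) 0))) - f x|)
          '' Set.Icc a b)) ∂ν < ⊤ := by
  obtain ⟨hA, hI, -, hcont, -, hCex⟩ := hf
  obtain ⟨C, hC⟩ := hCex (a/2) b (half_pos ha) (by linarith)
  have hC0 : 0 ≤ C := by
    have hmem : (a/2 : ℝ) ∈ Icc (a/2) b := ⟨le_refl _, by linarith⟩
    have h := le_trans (hC _ hmem).1 (hC _ hmem).2
    rw [show -(C : EReal) = ((-C : ℝ) : EReal) by simp] at h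
    have : (-C : ℝ) ≤ C := by exact_mod_cast h
    linarith
  set δ : ℝ := Real.exp (-(a/2)) with hδdef
  have hδ0 : 0 < δ := Real.exp_pos _
  have hδ1 : δ < 1 := by
    rw [hδdef]; exact Real.exp_lt_one_iff.mpr (by linarith)
  set K : ℝ := max (C/δ) (1/(1-δ)) with hKdef
  have hK0 : 0 ≤ K := le_trans (by positivity) (le_max_left _ _)
  have hpt : ∀ s : fragSimplex, sSup ((fun x =>
        |(if (s : ℕ → ℝ) 0 = 0 then (1 : ℝ) else f (x + Real.log ((s : ℕ → ℝ) 0))) - f x|)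
          '' Set.Icc a b) ≤ K * (1 - (s : ℕ → ℝ) 0) := by
    intro s
    set σ : ℝ := (s : ℕ → ℝ) 0 with hσdef
    obtain ⟨-, hpos, hsum, htot⟩ := s.2
    have hσ0 : 0 ≤ σ := hpos 0
    have hσ1 : σ ≤ 1 := le_trans (Summable.le_tsum hsum 0 (fun j _ => hpos j)) htot
    apply Real.sSup_le
    · rintro v ⟨x, hx, rfl⟩
      dsimp only
      by_cases hδσ : δ ≤ σ
      · have hσpos : 0 < σ := lt_of_lt_of_le hδ0 hδσ
        rw [if_neg hσpos.ne']
        have hlog1 : Real.log σ ≤ 0 := Real.log_nonpos hσ0 hσ1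
        have hlog2 : -(a/2) ≤ Real.log σ := by
          calc -(a/2) = Real.log δ := (Real.log_exp _).symm
          _ ≤ Real.log σ := Real.log_le_log hδ0 hδσ
        have hmem1 : x + Real.log σ ∈ Icc (a/2) b := ⟨by linarith [hx.1], by linarith [hx.2]⟩
        have hmem2 : x ∈ Icc (a/2) b := ⟨by linarith [hx.1], hx.2⟩
        have habs : |f (x + Real.log σ) - f x| = f (x + Real.log σ) - f x :=
          abs_of_nonneg (by linarith [hA (show x + Real.log σ ≤ x by linarith)])
        rw [habs]
        have hlip := lip_of_dini f (a/2) b C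
          (hcont.mono (fun z hz => lt_of_lt_of_le (half_pos ha) hz.1))
          (fun z hz => (hC z hz).1) _ hmem1 _ hmem2 (by linarith)
        have hloglb : -Real.log σ ≤ (1 - σ)/δ := by
          have h2 : Real.log σ⁻¹ ≤ σ⁻¹ - 1 :=
            Real.log_le_sub_one_of_pos (by positivity)
          rw [Real.log_inv] at h2
          have h3 : σ⁻¹ - 1 = (1 - σ)/σ := by field_simp
          have h4 : (1 - σ)/σ ≤ (1 - σ)/δ :=
            div_le_div_of_nonneg_left (by linarith) hδ0 hδσ
          linarith
        calc f (x + Real.log σ) - f x ≤ C * (x - (x + Real.log σ)) := hlip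
        _ = C * (-Real.log σ) := by ring
        _ ≤ C * ((1 - σ)/δ) := mul_le_mul_of_nonneg_left hloglb hC0
        _ = (C/δ) * (1 - σ) := by ring
        _ ≤ K * (1 - σ) := mul_le_mul_of_nonneg_right (le_max_left _ _) (by linarith)
      · push_neg at hδσ
        have hfx := hI x
        have hb1 : |(if σ = 0 then (1:ℝ) else f (x + Real.log σ)) - f x| ≤ 1 := by
          split_ifs with h0
          · rw [abs_le]; exact ⟨by linarith [hfx.2], by linarith [hfx.1]⟩
          · have h5 := hI (x + Real.log σ)
            rw [abs_le]; exact ⟨by linarith [hfx.2, h5.1], by linarith [hfx.1, h5.2]⟩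
        have h6 : (1:ℝ) ≤ (1/(1-δ)) * (1 - σ) := by
          rw [div_mul_eq_mul_div, one_mul, le_div_iff₀ (by linarith)]; linarith
        calc _ ≤ (1:ℝ) := hb1
        _ ≤ (1/(1-δ)) * (1 - σ) := h6
        _ ≤ K * (1 - σ) := mul_le_mul_of_nonneg_right (le_max_right _ _) (by linarith)
    · exact mul_nonneg hK0 (by linarith)
  calc ∫⁻ s, ENNReal.ofReal (sSup ((fun x =>
        |(if (s : ℕ → ℝ) 0 = 0 then (1 : ℝ) else f (x + Real.log ((s : ℕ → ℝ) 0))) - f x|)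
          '' Set.Icc a b)) ∂ν
      ≤ ∫⁻ s, ENNReal.ofReal K * ENNReal.ofReal (1 - (s : ℕ → ℝ) 0) ∂ν := by
        refine lintegral_mono fun s => ?_
        rw [← ENNReal.ofReal_mul hK0]
        exact ENNReal.ofReal_le_ofReal (hpt s)
  _ = ENNReal.ofReal K * ∫⁻ s, ENNReal.ofReal (1 - (s : ℕ → ℝ) 0) ∂ν :=
        lintegral_const_mul' _ _ ENNReal.ofReal_ne_top
  _ < ⊤ := ENNReal.mul_lt_top ENNReal.ofReal_lt_top hν
end

section
/- Let ν be a measure on 𝒮 with ∫_𝒮 (1 − s_1) ν(ds) < ∞, let f ∈ 𝒯 and let 0 < a < b. Then ∫_𝒮 sup_{x∈[a,b]} |P_f(x, s) − f(x)| ν(ds) < ∞. -/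
open MeasureTheory Filter Set

/-- The infinite product `P_f(x,s) = ∏_{n : s n > 0} f (x + ln (s n))`, realised as the
limit (= infimum, by antitonicity of partial products of `[0,1]`-valued factors) of the
partial products; factors with `s n = 0` are interpreted as `1`. -/
noncomputable def prodP (f : ℝ → ℝ) (x : ℝ) (s : ℕ → ℝ) : ℝ :=
  ⨅ N : ℕ, ∏ n ∈ Finset.range N, (if s n = 0 then (1 : ℝ) else f (x + Real.log (s n)))

lemma map_nhdsGT (z : ℝ) : Filter.map (fun h : ℝ => z + h) (nhdsWithin 0 (Set.Ioi 0)) =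
    nhdsWithin z (Set.Ioi z) := by
  have := (Homeomorph.addLeft z).isEmbedding.map_nhdsWithin_eq (Set.Ioi 0) 0
  simpa [image_const_add_Ioi] using this

lemma lipOfDini {f : ℝ → ℝ} {u v C : ℝ} (hc : ContinuousOn f (Icc u v))
    (hd : ∀ x ∈ Icc u v, -(C : EReal) ≤ diniE f x) :
    ∀ x ∈ Icc u v, ∀ y ∈ Icc u v, x ≤ y → f x - f y ≤ C * (y - x) := by
  intro x hx y hy hxy
  have key : ∀ ⦃w⦄, w ∈ Icc x v → -f w ≤ -f x + C * (w - x) := by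
    apply image_le_of_liminf_slope_right_le_deriv_boundary
      (f := fun z => -f z) (B := fun z => -f x + C * (z - x)) (B' := fun _ => C)
    · exact (hc.mono (Icc_subset_Icc_left hx.1)).neg
    · simp
    · fun_prop
    · intro z _
      have h1 : HasDerivWithinAt (fun w : ℝ => -f x + C * (w - x)) (C * 1) (Ici z) z :=
        (((hasDerivWithinAt_id z (Ici z)).sub_const x).const_mul C).const_add (-f x)
      simpa using h1
    · intro z hz r hr
      by_contra hcon
      have hev : ∀ᶠ w in nhdsWithin z (Set.Ioi z), r ≤ slope (fun t => -f t) z w := by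
        simpa [not_frequently, not_lt] using hcon
      have hev2 : ∀ᶠ h in nhdsWithin 0 (Set.Ioi (0:ℝ)),
          (((f (z + h) - f z) / h : ℝ) : EReal) ≤ ((-r : ℝ) : EReal) := by
        rw [← map_nhdsGT z, eventually_map] at hev
        filter_upwards [hev] with h hh
        rw [EReal.coe_le_coe_iff]
        have := hh
        rw [slope_def_field] at this
        have h3 : (-f (z + h) - -f z) / (z + h - z) = -((f (z + h) - f z) / h) := by
          rw [add_sub_cancel_left]; ring
        rw [h3] at this
        linarith
      have hls : diniE f z ≤ ((-r : ℝ) : EReal) :=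
        Filter.limsup_le_of_le (by isBoundedDefault) hev2
      have hzuv : z ∈ Icc u v := ⟨hx.1.trans hz.1, hz.2.le⟩
      have := (hd z hzuv).trans hls
      rw [show -(C : EReal) = ((-C : ℝ) : EReal) by simp, EReal.coe_le_coe_iff] at this
      linarith
  have := key ⟨hxy, hy.2⟩
  linarith

lemma prodGe (F : Finset ℕ) (g : ℕ → ℝ) (h0 : ∀ n, 0 ≤ g n) (h1 : ∀ n, g n ≤ 1) :
    1 - ∑ n ∈ F, (1 - g n) ≤ ∏ n ∈ F, g n := by
  classical
  induction F using Finset.cons_induction with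
  | empty => simp
  | cons i F hi ih =>
    rw [Finset.sum_cons, Finset.prod_cons]
    have hS : 0 ≤ ∑ n ∈ F, (1 - g n) := Finset.sum_nonneg fun n _ => by linarith [h1 n]
    nlinarith [h0 i, h1 i, ih, mul_le_mul_of_nonneg_left ih (h0 i)]

lemma pointwise_bound (f : ℝ → ℝ) (hf : MemT f) (a b : ℝ) (ha : 0 < a) (hab : a < b) :
    ∃ D : ℝ, 1 ≤ D ∧ ∀ s ∈ fragSimplex, ∀ x ∈ Icc a b,
      |prodP f x s - f x| ≤ D * (1 - s 0) := by
  obtain ⟨hanti, hmem, hone, hcont, -, hdini⟩ := hf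
  obtain ⟨C, hC⟩ := hdini (a / 2) b (by linarith) (by linarith)
  set Cm : ℝ := max C 0 with hCm
  have hCm0 : 0 ≤ Cm := le_max_right _ _
  have hexp : Real.exp (-(a / 2)) < 1 := Real.exp_lt_one_iff.mpr (by linarith)
  have hexp0 : 0 < Real.exp (-(a / 2)) := Real.exp_pos _
  have hden : 0 < 1 - Real.exp (-(a / 2)) := by linarith
  set K : ℝ := max (Cm * Real.exp (a / 2)) (1 / (1 - Real.exp (-(a / 2)))) with hK
  have hK1 : 1 ≤ K := by
    refine le_trans ?_ (le_max_right _ _)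
    rw [le_div_iff₀ hden]; linarith
  have hK0 : 0 ≤ K := by linarith
  refine ⟨K + Real.exp b, by linarith [Real.exp_pos b], ?_⟩
  intro s hs x hx
  obtain ⟨hmono, hpos, hsum, htsum⟩ := hs
  have hns : ∀ n, s n ≤ s 0 := by
    intro n
    induction n with
    | zero => exact le_refl (s 0)
    | succ m ihm => exact (hmono m).trans ihm
  have hs0le1 : s 0 ≤ 1 := (Summable.le_tsum hsum 0 fun i _ => hpos i).trans htsum
  have h1s0 : 0 ≤ 1 - s 0 := by linarith
  set g : ℕ → ℝ := fun n => if s n = 0 then (1 : ℝ) else f (x + Real.log (s n)) with hg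
  have hg01 : ∀ n, 0 ≤ g n ∧ g n ≤ 1 := by
    intro n
    simp only [hg]
    split
    · exact ⟨zero_le_one, le_refl 1⟩
    · exact ⟨(hmem _).1, (hmem _).2⟩
  set p : ℕ → ℝ := fun N => ∏ n ∈ Finset.range N, g n with hp
  have hP : prodP f x s = ⨅ N, p N := rfl
  have hbdd : BddBelow (Set.range p) := by
    refine ⟨0, ?_⟩
    rintro _ ⟨N, rfl⟩
    exact Finset.prod_nonneg fun n _ => (hg01 n).1
  by_cases hs0 : s 0 = 0
  · have hzero : ∀ n, s n = 0 := fun n => le_antisymm (hs0 ▸ hns n) (hpos n)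
    have hp1 : ∀ N, p N = 1 := by
      intro N
      simp [hp, hg, hzero]
    have : prodP f x s = 1 := by
      rw [hP]
      simp [funext hp1, ciInf_const]
    rw [this, hs0]
    have := hmem x
    have h1 : |1 - f x| ≤ 1 := by
      rw [abs_le]; constructor <;> [linarith [this.2]; linarith [this.1]]
    calc |1 - f x| ≤ 1 := h1
      _ ≤ (K + Real.exp b) * (1 - 0) := by
          have : 0 < Real.exp b := Real.exp_pos b
          nlinarith
  · have hs0pos : 0 < s 0 := lt_of_le_of_ne (hpos 0) (Ne.symm hs0)
    have hlog0 : Real.log (s 0) ≤ 0 := Real.log_nonpos (hpos 0) hs0le1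
    have hg0 : g 0 = f (x + Real.log (s 0)) := if_neg hs0
    have hfxg0 : f x ≤ g 0 := by
      rw [hg0]; exact hanti (by linarith)
    -- upper bound : prodP ≤ g 0
    have hup : prodP f x s ≤ g 0 := by
      rw [hP]
      have := ciInf_le hbdd 1
      simpa [hp, Finset.prod_range_one] using this
    -- bound on g 0 - f x
    have hB1 : g 0 - f x ≤ K * (1 - s 0) := by
      rw [hg0]
      by_cases hth : Real.exp (-(a / 2)) ≤ s 0
      · have hlg : -(a / 2) ≤ Real.log (s 0) := by
          rw [← Real.log_exp (-(a / 2))]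
          exact Real.log_le_log hexp0 hth
        have hxmem : x ∈ Icc (a / 2) b := ⟨by linarith [hx.1], hx.2⟩
        have hymem : x + Real.log (s 0) ∈ Icc (a / 2) b :=
          ⟨by linarith [hx.1], by linarith [hx.2]⟩
        have hcont' : ContinuousOn f (Icc (a / 2) b) :=
          hcont.mono fun z hz => by simp only [mem_Ioi]; linarith [hz.1]
        have hd' : ∀ z ∈ Icc (a / 2) b, -(Cm : EReal) ≤ diniE f z := by
          intro z hz
          refine le_trans ?_ (hC z hz).1
          rw [show -(Cm : EReal) = ((-Cm : ℝ) : EReal) by simp,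
            show -(C : EReal) = ((-C : ℝ) : EReal) by simp, EReal.coe_le_coe_iff]
          have : C ≤ Cm := le_max_left _ _
          linarith
        have hlip := lipOfDini hcont' hd' _ hymem x hxmem (by linarith)
        have hlogs : -Real.log (s 0) ≤ (1 - s 0) * Real.exp (a / 2) := by
          have h1 : Real.log (s 0)⁻¹ ≤ (s 0)⁻¹ - 1 :=
            Real.log_le_sub_one_of_pos (by positivity)
          rw [Real.log_inv] at h1
          have h2 : (s 0)⁻¹ ≤ Real.exp (a / 2) := by
            rw [inv_le_comm₀ hs0pos (Real.exp_pos _)]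
            calc (Real.exp (a / 2))⁻¹ = Real.exp (-(a / 2)) := by
                  rw [Real.exp_neg]
              _ ≤ s 0 := hth
          nlinarith [mul_le_mul_of_nonneg_left h2 h1s0,
            mul_inv_cancel₀ (ne_of_gt hs0pos), h1]
        calc f (x + Real.log (s 0)) - f x ≤ Cm * (x - (x + Real.log (s 0))) := hlip
          _ = Cm * (-Real.log (s 0)) := by ring_nf
          _ ≤ Cm * ((1 - s 0) * Real.exp (a / 2)) :=
              mul_le_mul_of_nonneg_left hlogs hCm0
          _ = (Cm * Real.exp (a / 2)) * (1 - s 0) := by ring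
          _ ≤ K * (1 - s 0) := mul_le_mul_of_nonneg_right (le_max_left _ _) h1s0
      · push_neg at hth
        have h1 : f (x + Real.log (s 0)) - f x ≤ 1 := by
          linarith [(hmem (x + Real.log (s 0))).2, (hmem x).1]
        have h2 : 1 - Real.exp (-(a / 2)) ≤ 1 - s 0 := by linarith
        have h3 : 1 / (1 - Real.exp (-(a / 2))) ≤ K := le_max_right _ _
        calc f (x + Real.log (s 0)) - f x ≤ 1 := h1
          _ ≤ K * (1 - s 0) := by
              have h4 : (1 / (1 - Real.exp (-(a / 2)))) * (1 - Real.exp (-(a / 2))) = 1 :=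
                one_div_mul_cancel (ne_of_gt hden)
              nlinarith [mul_le_mul h3 h2 (le_of_lt hden) hK0, h4]
    -- lower bound
    have hlow : f x - Real.exp b * (1 - s 0) ≤ prodP f x s := by
      rw [hP]
      refine le_ciInf fun N => ?_
      match N with
      | 0 =>
        have : p 0 = 1 := by simp [hp]
        rw [this]
        have := Real.exp_pos b
        nlinarith [(hmem x).2]
      | Nat.succ M =>
        have hins : Finset.range (M + 1) = insert 0 (Finset.Ico 1 (M + 1)) := by
          ext n
          simp only [Finset.mem_range, Finset.mem_insert, Finset.mem_Ico]
          omega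
        have hsplit : p (M + 1) = g 0 * ∏ n ∈ Finset.Ico 1 (M + 1), g n := by
          rw [hp]
          simp only []
          rw [hins, Finset.prod_insert (by simp)]
        set S : ℝ := ∑ n ∈ Finset.Ico 1 (M + 1), (1 - g n) with hS
        have hSnn : 0 ≤ S := Finset.sum_nonneg fun n _ => by linarith [(hg01 n).2]
        have hterm : ∀ n, 1 - g n ≤ Real.exp b * s n := by
          intro n
          by_cases hzn : s n = 0
          · simp [hg, hzn]
          · have hsn : 0 < s n := lt_of_le_of_ne (hpos n) (Ne.symm hzn)
            have hgn : g n = f (x + Real.log (s n)) := if_neg hzn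
            by_cases hneg : x + Real.log (s n) < 0
            · rw [hgn, hone _ hneg]
              simp
              positivity
            · push_neg at hneg
              have hlb : Real.exp (-b) ≤ s n := by
                rw [← Real.exp_log hsn]
                exact Real.exp_le_exp.mpr (by linarith [hx.2])
              have : 1 ≤ Real.exp b * s n := by
                calc (1 : ℝ) = Real.exp b * Real.exp (-b) := by
                      rw [← Real.exp_add]; simp
                  _ ≤ Real.exp b * s n :=
                      mul_le_mul_of_nonneg_left hlb (Real.exp_pos b).le
              linarith [(hg01 n).1]
        have hSsum : ∑ n ∈ Finset.Ico 1 (M + 1), s n ≤ 1 - s 0 := by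
          have h1 : s 0 + ∑ n ∈ Finset.Ico 1 (M + 1), s n
              = ∑ n ∈ insert 0 (Finset.Ico 1 (M + 1)), s n :=
            (Finset.sum_insert (by simp)).symm
          have h2 : ∑ n ∈ insert 0 (Finset.Ico 1 (M + 1)), s n ≤ ∑' n, s n :=
            Summable.sum_le_tsum _ (fun i _ => hpos i) hsum
          linarith
        have hSle : S ≤ Real.exp b * (1 - s 0) := by
          calc S ≤ ∑ n ∈ Finset.Ico 1 (M + 1), Real.exp b * s n :=
                Finset.sum_le_sum fun n _ => hterm n
            _ = Real.exp b * ∑ n ∈ Finset.Ico 1 (M + 1), s n := by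
                rw [Finset.mul_sum]
            _ ≤ Real.exp b * (1 - s 0) :=
                mul_le_mul_of_nonneg_left hSsum (Real.exp_pos b).le
        have hQ : 1 - S ≤ ∏ n ∈ Finset.Ico 1 (M + 1), g n :=
          prodGe _ _ (fun n => (hg01 n).1) (fun n => (hg01 n).2)
        rw [hsplit]
        nlinarith [(hg01 0).1, (hg01 0).2, mul_le_mul_of_nonneg_left hQ (hg01 0).1]
    -- combine
    have hdist : (K + Real.exp b) * (1 - s 0)
        = K * (1 - s 0) + Real.exp b * (1 - s 0) := by ring
    rw [abs_sub_le_iff, hdist]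
    constructor
    · linarith [hup, hB1, mul_nonneg (Real.exp_pos b).le h1s0]
    · linarith [hlow, mul_nonneg hK0 h1s0]

/-- Finiteness of `∫_𝒮 sup_{x ∈ [a,b]} |P_f(x,s) - f(x)| ν(ds)` for `f ∈ 𝒯`. -/
theorem stmt_8 (ν : MeasureTheory.Measure fragSimplex)
    (hν : ∫⁻ s, ENNReal.ofReal (1 - (s : ℕ → ℝ) 0) ∂ν < ⊤)
    (f : ℝ → ℝ) (hf : MemT f) (a b : ℝ) (ha : 0 < a) (hab : a < b) :
    ∫⁻ s, ENNReal.ofReal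
        (sSup ((fun x => |prodP f x (s : ℕ → ℝ) - f x|) '' Set.Icc a b)) ∂ν < ⊤ := by
  obtain ⟨D, hD1, hbound⟩ := pointwise_bound f hf a b ha hab
  have hD0 : 0 ≤ D := by linarith
  have hsup : ∀ s : fragSimplex,
      sSup ((fun x => |prodP f x (s : ℕ → ℝ) - f x|) '' Set.Icc a b)
        ≤ D * (1 - (s : ℕ → ℝ) 0) := by
    intro s
    obtain ⟨hmono, hpos, hsum, htsum⟩ := s.2
    have hs0le1 : (s : ℕ → ℝ) 0 ≤ 1 :=
      (Summable.le_tsum hsum 0 fun i _ => hpos i).trans htsum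
    refine Real.sSup_le ?_ (by nlinarith)
    rintro _ ⟨x, hx, rfl⟩
    exact hbound (s : ℕ → ℝ) s.2 x hx
  calc ∫⁻ s, ENNReal.ofReal
        (sSup ((fun x => |prodP f x (s : ℕ → ℝ) - f x|) '' Set.Icc a b)) ∂ν
      ≤ ∫⁻ s, ENNReal.ofReal (D * (1 - (s : ℕ → ℝ) 0)) ∂ν :=
        lintegral_mono fun s => ENNReal.ofReal_le_ofReal (hsup s)
    _ = ∫⁻ s, ENNReal.ofReal D * ENNReal.ofReal (1 - (s : ℕ → ℝ) 0) ∂ν := by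
        simp_rw [ENNReal.ofReal_mul hD0]
    _ = ENNReal.ofReal D * ∫⁻ s, ENNReal.ofReal (1 - (s : ℕ → ℝ) 0) ∂ν :=
        lintegral_const_mul' _ _ ENNReal.ofReal_ne_top
    _ < ⊤ := ENNReal.mul_lt_top ENNReal.ofReal_lt_top hν
end

section
/- Let ν be a measure on 𝒮 with ∫_𝒮 (1 − s_1) ν(ds) < ∞ and let f ∈ 𝒯. Then for every x > 0 the function s ↦ P_f(x, s) − f(x) is ν-integrable on 𝒮, so that Lf(x) := ∫_𝒮 ( P_f(x, s) − f(x) ) ν(ds) is well defined and finite; moreover sup_{x∈[a,b]} |Lf(x)| < ∞ for all 0 < a < b. -/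
open MeasureTheory Filter Set Topology

/-- Weierstrass product inequality. -/
lemma weier_aux (g : ℕ → ℝ) (h0 : ∀ n, 0 ≤ g n) (h1 : ∀ n, g n ≤ 1) (N : ℕ) :
    1 - ∑ n ∈ Finset.range N, (1 - g n) ≤ ∏ n ∈ Finset.range N, g n := by
  induction N with
  | zero => simp
  | succ M ih =>
    rw [Finset.prod_range_succ, Finset.sum_range_succ]
    have hp0 : 0 ≤ ∏ n ∈ Finset.range M, g n := Finset.prod_nonneg fun i _ => h0 i
    have hs0 : 0 ≤ ∑ n ∈ Finset.range M, (1 - g n) :=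
      Finset.sum_nonneg fun i _ => by linarith [h1 i]
    nlinarith [mul_nonneg (sub_nonneg.2 ih) (h0 M),
      mul_nonneg hs0 (sub_nonneg.2 (h1 M)), h0 M, h1 M]

/-- From a lower bound on the upper right Dini derivative we get a one-sided
Lipschitz-type bound. -/
lemma dini_bound {f : ℝ → ℝ} {u v C : ℝ} (huv : u ≤ v)
    (hcont : ContinuousOn f (Set.Icc u v))
    (hd : ∀ y ∈ Set.Ico u v, -(C : EReal) ≤ diniE f y) :
    f u - f v ≤ C * (v - u) := by
  have key : ∀ y ∈ Set.Icc u v, -f y ≤ -f u + C * (y - u) := by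
    apply image_le_of_liminf_slope_right_le_deriv_boundary
      (f := fun y => -f y) (B := fun y => -f u + C * (y - u)) (B' := fun _ => C)
    · exact hcont.neg
    · simp
    · fun_prop
    · intro y _
      have h1 : HasDerivWithinAt (fun z : ℝ => z - u) 1 (Set.Ici y) y :=
        (hasDerivWithinAt_id y _).sub_const u
      simpa using (h1.const_mul C).const_add (-f u)
    · intro y hy r hr
      have hlt : ((-r : ℝ) : EReal) < diniE f y := by
        refine lt_of_lt_of_le ?_ (hd y hy)
        rw [show -(C : EReal) = ((-C : ℝ) : EReal) by rw [EReal.coe_neg]]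
        exact_mod_cast (by linarith : -r < -C)
      have hfreq : ∃ᶠ h in 𝓝[>] (0 : ℝ),
          ((-r : ℝ) : EReal) < (((f (y + h) - f y) / h : ℝ) : EReal) :=
        Filter.frequently_lt_of_lt_limsup (by isBoundedDefault) hlt
      have hmem : ∀ᶠ h in 𝓝[>] (0 : ℝ), h ∈ Set.Ioi (0 : ℝ) := self_mem_nhdsWithin
      have hcomb := hfreq.and_eventually hmem
      have hmap : Filter.map (fun h : ℝ => y + h) (𝓝[>] (0 : ℝ)) = 𝓝[>] y := by
        have := (Homeomorph.addLeft y).isEmbedding.map_nhdsWithin_eq (Set.Ioi (0 : ℝ)) 0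
        simpa [Set.image_const_add_Ioi] using this
      rw [← hmap, Filter.frequently_map]
      refine hcomb.mono fun h ⟨hP, hpos⟩ => ?_
      rw [Set.mem_Ioi] at hpos
      have hP' : -r < (f (y + h) - f y) / h := by exact_mod_cast hP
      have hh : y + h - y = h := by ring
      rw [slope_def_field, hh, div_lt_iff₀ hpos]
      have := (lt_div_iff₀ hpos).1 hP'
      linarith
  have := key v ⟨huv, le_rfl⟩
  linarith

/-- The key uniform bound: `|P_f(x,s) - f x| ≤ K (1 - s 0)` for `x ∈ [a,b]`. -/
lemma key_bound (f : ℝ → ℝ) (hf : MemT f) (a b : ℝ) (ha : 0 < a) (hab : a < b) :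
    ∃ K : ℝ, 0 ≤ K ∧ ∀ x ∈ Set.Icc a b, ∀ s ∈ fragSimplex,
      |prodP f x s - f x| ≤ K * (1 - s 0) := by
  obtain ⟨hmono, hbox, hneg, hcont, -, hdini⟩ := hf
  obtain ⟨C, hC⟩ := hdini (a / 2) b (by linarith) (by linarith)
  set C' := max C 0 with hC'def
  have hC'0 : 0 ≤ C' := le_max_right _ _
  set K := max (Real.exp b) (max (C' * Real.exp (a / 2))
    (1 - Real.exp (-(a / 2)))⁻¹) with hKdef
  have hKexp : Real.exp b ≤ K := le_max_left _ _
  have hK0 : 0 ≤ K := (Real.exp_pos b).le.trans hKexp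
  refine ⟨K, hK0, ?_⟩
  rintro x hx s ⟨hdec, hpos, hsum, htsum⟩
  set g : ℕ → ℝ := fun n => if s n = 0 then (1 : ℝ) else f (x + Real.log (s n)) with hgdef
  have hgprod : prodP f x s = ⨅ N : ℕ, ∏ n ∈ Finset.range N, g n := rfl
  have hg0 : ∀ n, 0 ≤ g n := by
    intro n; by_cases h : s n = 0
    · simp [hgdef, h]
    · simp only [hgdef, h, if_false]; exact (hbox _).1
  have hg1 : ∀ n, g n ≤ 1 := by
    intro n; by_cases h : s n = 0
    · simp [hgdef, h]
    · simp only [hgdef, h, if_false]; exact (hbox _).2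
  have hs0le1 : s 0 ≤ 1 := le_trans (Summable.le_tsum hsum 0 fun j _ => hpos j) htsum
  have h1s0 : 0 ≤ 1 - s 0 := by linarith
  have hfg : f x ≤ g 0 := by
    by_cases h : s 0 = 0
    · simp only [hgdef, h, if_true]; simpa using (hbox x).2
    · have hs0pos : 0 < s 0 := lt_of_le_of_ne (hpos 0) (Ne.symm h)
      have hlog : Real.log (s 0) ≤ 0 := Real.log_nonpos hs0pos.le hs0le1
      simp only [hgdef, h, if_false]
      exact hmono (by linarith)
  have hone : ∀ n, 1 - g n ≤ Real.exp b * s n := by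
    intro n
    by_cases h : s n = 0
    · simp [hgdef, h]
    · have hsn : 0 < s n := lt_of_le_of_ne (hpos n) (Ne.symm h)
      by_cases h2 : x + Real.log (s n) < 0
      · have hgn : g n = 1 := by simp [hgdef, h, hneg _ h2]
        rw [hgn]
        have := mul_nonneg (Real.exp_pos b).le (hpos n)
        linarith
      · push_neg at h2
        have hsn' : Real.exp (-x) ≤ s n := by
          rw [← Real.exp_log hsn]
          exact Real.exp_le_exp.2 (by linarith)
        have h3 : (1 : ℝ) ≤ Real.exp b * s n := by
          calc (1 : ℝ) = Real.exp 0 := Real.exp_zero.symm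
            _ ≤ Real.exp (b + -x) := Real.exp_le_exp.2 (by linarith [hx.2])
            _ = Real.exp b * Real.exp (-x) := Real.exp_add b (-x)
            _ ≤ Real.exp b * s n :=
                mul_le_mul_of_nonneg_left hsn' (Real.exp_pos b).le
        linarith [hg0 n]
  have hbdd : BddBelow (Set.range fun N => ∏ n ∈ Finset.range N, g n) :=
    ⟨0, by rintro _ ⟨N, rfl⟩; exact Finset.prod_nonneg fun i _ => hg0 i⟩
  have hPle : prodP f x s ≤ g 0 := by
    rw [hgprod]
    calc (⨅ N : ℕ, ∏ n ∈ Finset.range N, g n) ≤ ∏ n ∈ Finset.range 1, g n :=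
          ciInf_le hbdd 1
      _ = g 0 := by simp
  have hPge : g 0 - Real.exp b * (1 - s 0) ≤ prodP f x s := by
    rw [hgprod]
    apply le_ciInf
    intro N
    have hT0 : 0 ≤ Real.exp b * (1 - s 0) := mul_nonneg (Real.exp_pos b).le h1s0
    cases N with
    | zero => simp; linarith [hg1 0]
    | succ M =>
      rw [Finset.prod_range_succ']
      have hW := weier_aux (fun i => g (i + 1)) (fun i => hg0 _) (fun i => hg1 _) M
      set S := ∑ i ∈ Finset.range M, (1 - g (i + 1)) with hSdef
      have hS0 : 0 ≤ S := Finset.sum_nonneg fun i _ => by linarith [hg1 (i + 1)]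
      have hSle : S ≤ Real.exp b * (1 - s 0) := by
        have h1 : S ≤ ∑ i ∈ Finset.range M, Real.exp b * s (i + 1) :=
          Finset.sum_le_sum fun i _ => hone (i + 1)
        have h2 : ∑ i ∈ Finset.range M, Real.exp b * s (i + 1)
            = Real.exp b * ∑ i ∈ Finset.range M, s (i + 1) := by
          rw [Finset.mul_sum]
        have h3 : ∑ i ∈ Finset.range M, s (i + 1) ≤ 1 - s 0 := by
          have he : ∑ i ∈ Finset.range M, s (i + 1)
              = (∑ n ∈ Finset.range (M + 1), s n) - s 0 := by
            rw [Finset.sum_range_succ']; ring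
          have h4 : ∑ n ∈ Finset.range (M + 1), s n ≤ ∑' n, s n :=
            Summable.sum_le_tsum _ (fun i _ => hpos i) hsum
          rw [he]; linarith
        calc S ≤ Real.exp b * ∑ i ∈ Finset.range M, s (i + 1) := by rw [← h2]; exact h1
          _ ≤ Real.exp b * (1 - s 0) :=
              mul_le_mul_of_nonneg_left h3 (Real.exp_pos b).le
      have hP' : (1 - S) * g 0 ≤ (∏ i ∈ Finset.range M, g (i + 1)) * g 0 :=
        mul_le_mul_of_nonneg_right hW (hg0 0)
      nlinarith [hg1 0, hg0 0, mul_nonneg hS0 (sub_nonneg.2 (hg1 0))]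
  have hupper : g 0 - f x ≤ K * (1 - s 0) := by
    by_cases hcase : s 0 < Real.exp (-(a / 2))
    · have he1 : Real.exp (-(a / 2)) < 1 := by
        have := Real.exp_lt_exp.mpr (show -(a / 2) < 0 by linarith)
        simpa [Real.exp_zero] using this
      have hd : 0 < 1 - Real.exp (-(a / 2)) := by linarith
      have hKge : (1 - Real.exp (-(a / 2)))⁻¹ ≤ K :=
        le_trans (le_max_right _ _) (le_max_right _ _)
      have h2 : 1 - Real.exp (-(a / 2)) ≤ 1 - s 0 := by linarith
      calc g 0 - f x ≤ 1 := by linarith [hg1 0, (hbox x).1]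
        _ = (1 - Real.exp (-(a / 2)))⁻¹ * (1 - Real.exp (-(a / 2))) :=
            (inv_mul_cancel₀ hd.ne').symm
        _ ≤ (1 - Real.exp (-(a / 2)))⁻¹ * (1 - s 0) :=
            mul_le_mul_of_nonneg_left h2 (inv_nonneg.2 hd.le)
        _ ≤ K * (1 - s 0) := mul_le_mul_of_nonneg_right hKge h1s0
    · push_neg at hcase
      have hs0pos : 0 < s 0 := lt_of_lt_of_le (Real.exp_pos _) hcase
      have hlog : -(a / 2) ≤ Real.log (s 0) := (Real.le_log_iff_exp_le hs0pos).2 hcase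
      have hlog0 : Real.log (s 0) ≤ 0 := Real.log_nonpos hs0pos.le hs0le1
      set u := x + Real.log (s 0) with hudef
      have hu1 : a / 2 ≤ u := by have := hx.1; simp only [hudef]; linarith
      have huv : u ≤ x := by simp only [hudef]; linarith
      have hsub : Set.Icc u x ⊆ Set.Ioi (0 : ℝ) := fun y hy => by
        simp only [Set.mem_Ioi]; linarith [hy.1]
      have hdini' : ∀ y ∈ Set.Ico u x, -(C' : EReal) ≤ diniE f y := by
        intro y hy
        have hy' : y ∈ Set.Icc (a / 2) b := ⟨le_trans hu1 hy.1, le_trans hy.2.le hx.2⟩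
        refine le_trans ?_ (hC y hy').1
        rw [show -(C' : EReal) = ((-C' : ℝ) : EReal) by rw [EReal.coe_neg],
          show -(C : EReal) = ((-C : ℝ) : EReal) by rw [EReal.coe_neg]]
        exact_mod_cast neg_le_neg (le_max_left C 0)
      have hdb := dini_bound huv (hcont.mono hsub) hdini'
      have hKC : C' * Real.exp (a / 2) ≤ K :=
        le_trans (le_max_left _ _) (le_max_right _ _)
      have hlog2 : -Real.log (s 0) ≤ (1 - s 0) * Real.exp (a / 2) := by
        have h1 : Real.log (s 0)⁻¹ ≤ (s 0)⁻¹ - 1 :=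
          Real.log_le_sub_one_of_pos (inv_pos.2 hs0pos)
        rw [Real.log_inv] at h1
        have h2 : (s 0)⁻¹ ≤ Real.exp (a / 2) := by
          have := inv_anti₀ (Real.exp_pos (-(a / 2))) hcase
          rwa [Real.exp_neg, inv_inv] at this
        have heq : (1 - s 0) * (s 0)⁻¹ = (s 0)⁻¹ - 1 := by field_simp
        have h3 : (1 - s 0) * (s 0)⁻¹ ≤ (1 - s 0) * Real.exp (a / 2) :=
          mul_le_mul_of_nonneg_left h2 h1s0
        linarith
      have hgu : g 0 = f u := by
        simp only [hgdef, hs0pos.ne', if_false, hudef]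
      calc g 0 - f x = f u - f x := by rw [hgu]
        _ ≤ C' * (x - u) := hdb
        _ = C' * (-Real.log (s 0)) := by rw [hudef]; ring_nf
        _ ≤ C' * ((1 - s 0) * Real.exp (a / 2)) :=
            mul_le_mul_of_nonneg_left hlog2 hC'0
        _ = (C' * Real.exp (a / 2)) * (1 - s 0) := by ring
        _ ≤ K * (1 - s 0) := mul_le_mul_of_nonneg_right hKC h1s0
  rw [abs_le]
  constructor
  · have hKe : Real.exp b * (1 - s 0) ≤ K * (1 - s 0) :=
      mul_le_mul_of_nonneg_right hKexp h1s0
    linarith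
  · linarith

/-- Measurability of `s ↦ prodP f x s` on the simplex. -/
lemma prodP_measurable (f : ℝ → ℝ) (hmono : Antitone f)
    (hbox : ∀ x, f x ∈ Set.Icc (0 : ℝ) 1) (x : ℝ) :
    Measurable (fun s : fragSimplex => prodP f x (s : ℕ → ℝ)) := by
  have hfmeas : Measurable f := hmono.measurable
  have hφ : Measurable fun t : ℝ => if t = 0 then (1 : ℝ) else f (x + Real.log t) := by
    refine Measurable.ite ?_ measurable_const
      (hfmeas.comp (measurable_const.add Real.measurable_log))
    exact (show MeasurableSet ({0} : Set ℝ) from measurableSet_singleton 0)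
  have hFN : ∀ N : ℕ, Measurable fun s : fragSimplex =>
      ∏ n ∈ Finset.range N,
        (if (s : ℕ → ℝ) n = 0 then (1 : ℝ) else f (x + Real.log ((s : ℕ → ℝ) n))) := by
    intro N
    apply Finset.measurable_prod
    intro n _
    exact hφ.comp ((measurable_pi_apply n).comp measurable_subtype_coe)
  apply measurable_of_tendsto_metrizable hFN
  rw [tendsto_pi_nhds]
  intro s
  set g : ℕ → ℝ := fun n =>
    if (s : ℕ → ℝ) n = 0 then (1 : ℝ) else f (x + Real.log ((s : ℕ → ℝ) n)) with hgdef
  have hg0 : ∀ n, 0 ≤ g n := by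
    intro n; by_cases h : (s : ℕ → ℝ) n = 0
    · simp [hgdef, h]
    · simp only [hgdef, h, if_false]; exact (hbox _).1
  have hg1 : ∀ n, g n ≤ 1 := by
    intro n; by_cases h : (s : ℕ → ℝ) n = 0
    · simp [hgdef, h]
    · simp only [hgdef, h, if_false]; exact (hbox _).2
  have hgprod : prodP f x (s : ℕ → ℝ) = ⨅ N : ℕ, ∏ n ∈ Finset.range N, g n := rfl
  have hant : Antitone fun N => ∏ n ∈ Finset.range N, g n := by
    apply antitone_nat_of_succ_le
    intro N
    rw [Finset.prod_range_succ]
    exact mul_le_of_le_one_right (Finset.prod_nonneg fun i _ => hg0 i) (hg1 N)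
  have hbdd : BddBelow (Set.range fun N => ∏ n ∈ Finset.range N, g n) :=
    ⟨0, by rintro _ ⟨N, rfl⟩; exact Finset.prod_nonneg fun i _ => hg0 i⟩
  rw [hgprod]
  exact tendsto_atTop_ciInf hant hbdd

/-- For `f ∈ 𝒯` and every `x > 0` the map `s ↦ P_f(x,s) - f(x)` is `ν`-integrable, so
`Lf(x) = ∫_𝒮 (P_f(x,s) - f(x)) ν(ds)` is well defined and finite; moreover `Lf` is
bounded on every compact subinterval `[a,b]` of `(0,∞)`. -/
theorem stmt_9 (ν : MeasureTheory.Measure fragSimplex)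
    (hν : ∫⁻ s, ENNReal.ofReal (1 - (s : ℕ → ℝ) 0) ∂ν < ⊤)
    (f : ℝ → ℝ) (hf : MemT f) :
    (∀ x : ℝ, 0 < x →
        MeasureTheory.Integrable (fun s : fragSimplex => prodP f x (s : ℕ → ℝ) - f x) ν) ∧
      ∀ a b : ℝ, 0 < a → a < b → ∃ C : ℝ, ∀ x ∈ Set.Icc a b,
        |∫ s, (prodP f x (s : ℕ → ℝ) - f x) ∂ν| ≤ C := by
  have h1s : ∀ s : fragSimplex, 0 ≤ 1 - (s : ℕ → ℝ) 0 := by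
    intro s
    obtain ⟨-, hpos, hsum, ht⟩ := s.2
    have := le_trans (Summable.le_tsum hsum 0 fun j _ => hpos j) ht
    linarith
  have hbound_int : ∀ K : ℝ, 0 ≤ K →
      Integrable (fun s : fragSimplex => K * (1 - (s : ℕ → ℝ) 0)) ν := by
    intro K hK
    have hm : Measurable fun s : fragSimplex => K * (1 - (s : ℕ → ℝ) 0) :=
      measurable_const.mul
        (measurable_const.sub ((measurable_pi_apply 0).comp measurable_subtype_coe))
    refine ⟨hm.aestronglyMeasurable, ?_⟩
    rw [hasFiniteIntegral_iff_norm]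
    calc (∫⁻ s, ENNReal.ofReal ‖K * (1 - (s : ℕ → ℝ) 0)‖ ∂ν)
        = ∫⁻ s, ENNReal.ofReal K * ENNReal.ofReal (1 - (s : ℕ → ℝ) 0) ∂ν := by
          refine lintegral_congr fun s => ?_
          rw [Real.norm_of_nonneg (mul_nonneg hK (h1s s)), ENNReal.ofReal_mul hK]
      _ = ENNReal.ofReal K * ∫⁻ s, ENNReal.ofReal (1 - (s : ℕ → ℝ) 0) ∂ν :=
          lintegral_const_mul' _ _ ENNReal.ofReal_ne_top
      _ < ⊤ := ENNReal.mul_lt_top ENNReal.ofReal_lt_top hν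
  have hint : ∀ (x K : ℝ), 0 ≤ K →
      (∀ s ∈ fragSimplex, |prodP f x s - f x| ≤ K * (1 - s 0)) →
      Integrable (fun s : fragSimplex => prodP f x (s : ℕ → ℝ) - f x) ν := by
    intro x K hK hb
    refine Integrable.mono' (hbound_int K hK)
      (((prodP_measurable f hf.1 hf.2.1 x).sub measurable_const).aestronglyMeasurable) ?_
    refine ae_of_all ν fun s => ?_
    rw [Real.norm_eq_abs]
    exact hb (s : ℕ → ℝ) s.2
  constructor
  · intro x hx
    obtain ⟨K, hK0, hKb⟩ := key_bound f hf x (x + 1) hx (lt_add_one x)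
    exact hint x K hK0 fun s hs => hKb x ⟨le_rfl, by linarith⟩ s hs
  · intro a b ha hab
    obtain ⟨K, hK0, hKb⟩ := key_bound f hf a b ha hab
    refine ⟨∫ s, K * (1 - (s : ℕ → ℝ) 0) ∂ν, ?_⟩
    intro x hx
    have hgint := hint x K hK0 fun s hs => hKb x hx s hs
    have h1 : |∫ s, (prodP f x (s : ℕ → ℝ) - f x) ∂ν|
        ≤ ∫ s, |prodP f x (s : ℕ → ℝ) - f x| ∂ν := by
      rw [← Real.norm_eq_abs]
      refine le_trans (norm_integral_le_integral_norm _) ?_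
      simp [Real.norm_eq_abs]
    refine le_trans h1 ?_
    refine integral_mono hgint.abs (hbound_int K hK0) fun s => ?_
    exact hKb x hx (s : ℕ → ℝ) s.2
end
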